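/- Let α > 0, K > 0, M ≥ 0, and let U : ℤ → ℝ be symmetric (U(−j) = U(j)) with U(j) ≥ −M for all j and U(j)/|j|^α → K as |j| → ∞. Fix an integer q ≥ 2. Then for every β > 0 the sums ∑_{j∈ℤ} exp(−β·U(|a+qj|)) are finite for each a ∈ {0,…,q−1}, and lim_{β↓0} max_{0≤a≤q−1} | log( ∑_{j∈ℤ} exp(−β·U(|a+qj|)) ) − log( ∑_{j∈ℤ} exp(−β·U(|qj|)) ) | = 0. -/

import Mathlib

open scoped BigOperators
open Real Filter

set_option maxHeartbeats 4000000

noncomputable def Psum (α t : ℝ) : ℝ := ∑' i : ℕ, Real.exp (-(t * (i : ℝ)) ^ α)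

lemma Psum_def (α t : ℝ) : Psum α t = ∑' i : ℕ, Real.exp (-(t * (i : ℝ)) ^ α) := rfl

lemma expArg_le {α x y : ℝ} (hα : 0 < α) (h0 : 0 ≤ x) (hxy : x ≤ y) :
    Real.exp (-(y ^ α)) ≤ Real.exp (-(x ^ α)) :=
  Real.exp_le_exp.mpr (neg_le_neg (Real.rpow_le_rpow h0 hxy hα.le))

lemma summable_P {α t : ℝ} (hα : 0 < α) (ht : 0 < t) :
    Summable (fun i : ℕ => Real.exp (-(t * (i : ℝ)) ^ α)) := by
  have hlog := isLittleO_log_rpow_atTop hα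
  have hc : (0:ℝ) < t ^ α / 2 := by positivity
  have h1 : ∀ᶠ x : ℝ in atTop, ‖Real.log x‖ ≤ t ^ α / 2 * ‖x ^ α‖ := hlog.def hc
  have h2 : ∀ᶠ x : ℝ in atTop, Real.exp (-(t * x) ^ α) ≤ x ^ (-2 : ℝ) := by
    filter_upwards [h1, eventually_ge_atTop (1:ℝ)] with x hx h1x
    have hx0 : (0:ℝ) < x := lt_of_lt_of_le one_pos h1x
    have hlx : Real.log x ≤ t ^ α / 2 * x ^ α := by
      have := hx
      rwa [Real.norm_eq_abs, Real.norm_eq_abs, abs_of_nonneg (Real.log_nonneg h1x),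
        abs_of_nonneg (Real.rpow_nonneg hx0.le α)] at this
    have harg : 2 * Real.log x ≤ (t * x) ^ α := by
      rw [Real.mul_rpow ht.le hx0.le]; nlinarith
    calc Real.exp (-(t * x) ^ α) ≤ Real.exp (-(2 * Real.log x)) :=
          Real.exp_le_exp.mpr (by linarith)
      _ = x ^ (-2 : ℝ) := by
          rw [Real.rpow_def_of_pos hx0]; ring_nf
  have h3 : ∀ᶠ i : ℕ in atTop, ‖Real.exp (-(t * (i:ℝ)) ^ α)‖ ≤ (i:ℝ) ^ (-2 : ℝ) := by
    have := tendsto_natCast_atTop_atTop (R := ℝ) |>.eventually h2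
    filter_upwards [this] with i hi
    rwa [Real.norm_eq_abs, abs_of_pos (Real.exp_pos _)]
  refine Summable.of_norm_bounded_eventually (g := fun i : ℕ => (i:ℝ) ^ (-2 : ℝ))
    (Real.summable_nat_rpow.mpr (by norm_num)) ?_
  rwa [Nat.cofinite_eq_atTop]

lemma Psum_nonneg (α t : ℝ) : 0 ≤ Psum α t :=
  tsum_nonneg fun _ => (Real.exp_pos _).le

lemma P_anti {α t t' : ℝ} (hα : 0 < α) (ht : 0 < t) (htt : t ≤ t') :
    Psum α t' ≤ Psum α t := by
  refine Summable.tsum_le_tsum (fun i => expArg_le hα (by positivity) ?_)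
    (summable_P hα (lt_of_lt_of_le ht htt)) (summable_P hα ht)
  have : (0:ℝ) ≤ (i:ℝ) := Nat.cast_nonneg i
  nlinarith

lemma P_eq_double {α t : ℝ} (hα : 0 < α) (ht : 0 < t) {m : ℕ} (hm : 1 ≤ m) :
    Psum α (t / m) = ∑' j : ℕ, ∑ r : Fin m,
      Real.exp (-(t / m * ((j * m + (r : ℕ) : ℕ) : ℝ)) ^ α) := by
  haveI : NeZero m := ⟨by omega⟩
  have htm : (0:ℝ) < t / m := by
    have : (0:ℝ) < m := by exact_mod_cast hm
    positivity
  have hs : Summable (fun i : ℕ => Real.exp (-(t / m * (i : ℝ)) ^ α)) := summable_P hα htm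
  have he := ((Nat.divModEquiv m).symm.tsum_eq
    (fun i : ℕ => Real.exp (-(t / m * (i : ℝ)) ^ α))).symm
  rw [Psum, he, Summable.tsum_prod (by exact (Nat.divModEquiv m).symm.summable_iff.mpr hs)]
  exact tsum_congr fun j => by rw [tsum_fintype]; rfl

lemma zoomB {α t : ℝ} (hα : 0 < α) (ht : 0 < t) {m : ℕ} (hm : 1 ≤ m) :
    Psum α (t / m) ≤ m * Psum α t := by
  have hm' : (0:ℝ) < m := by exact_mod_cast hm
  rw [P_eq_double hα ht hm]
  have key : ∀ j : ℕ, ∑ r : Fin m,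
      Real.exp (-(t / m * ((j * m + (r : ℕ) : ℕ) : ℝ)) ^ α)
        ≤ m * Real.exp (-(t * (j : ℝ)) ^ α) := by
    intro j
    have : ∀ r : Fin m, Real.exp (-(t / m * ((j * m + (r : ℕ) : ℕ) : ℝ)) ^ α)
        ≤ Real.exp (-(t * (j : ℝ)) ^ α) := by
      intro r
      refine expArg_le hα (by positivity) ?_
      have hr : (0:ℝ) ≤ (r : ℕ) := Nat.cast_nonneg _
      push_cast
      rw [div_mul_eq_mul_div, le_div_iff₀ hm']
      nlinarith [Nat.cast_nonneg (α := ℝ) j]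
    calc ∑ r : Fin m, Real.exp (-(t / m * ((j * m + (r : ℕ) : ℕ) : ℝ)) ^ α)
        ≤ Finset.univ.card • Real.exp (-(t * (j : ℝ)) ^ α) :=
          Finset.sum_le_card_nsmul _ _ _ (fun r _ => this r)
      _ = m * Real.exp (-(t * (j : ℝ)) ^ α) := by
          simp [nsmul_eq_mul]
  have hsumL : Summable (fun j : ℕ => ∑ r : Fin m,
      Real.exp (-(t / m * ((j * m + (r : ℕ) : ℕ) : ℝ)) ^ α)) := by
    refine Summable.of_nonneg_of_le
      (fun j => Finset.sum_nonneg fun r _ => (Real.exp_pos _).le) key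
      ((summable_P hα ht).mul_left (m:ℝ))
  rw [show (m : ℝ) * Psum α t = ∑' j : ℕ, m * Real.exp (-(t * (j:ℝ)) ^ α) by
    rw [Psum, tsum_mul_left]]
  exact Summable.tsum_le_tsum key hsumL ((summable_P hα ht).mul_left (m:ℝ))

lemma Psum_shift {α t : ℝ} (hα : 0 < α) (ht : 0 < t) :
    ∑' j : ℕ, Real.exp (-(t * ((j : ℝ) + 1)) ^ α) = Psum α t - 1 := by
  have hs := summable_P hα ht
  have h0 : Real.exp (-(t * ((0:ℕ) : ℝ)) ^ α) = 1 := by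
    simp [Real.zero_rpow hα.ne']
  have := Summable.tsum_eq_zero_add hs
  rw [h0] at this
  have hcast : ∀ j : ℕ, Real.exp (-(t * ((j + 1 : ℕ) : ℝ)) ^ α)
      = Real.exp (-(t * ((j : ℝ) + 1)) ^ α) := by intro j; push_cast; ring_nf
  rw [Psum, this]
  simp only [hcast]
  ring

lemma summable_shift {α t : ℝ} (hα : 0 < α) (ht : 0 < t) :
    Summable (fun j : ℕ => Real.exp (-(t * ((j : ℝ) + 1)) ^ α)) := by
  have := (summable_nat_add_iff 1).mpr (summable_P hα ht)
  refine this.congr fun j => ?_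
  push_cast
  ring_nf

lemma zoomA {α t : ℝ} (hα : 0 < α) (ht : 0 < t) {m : ℕ} (hm : 1 ≤ m) :
    Psum α t ≤ Psum α (t / m) / m + 1 := by
  have hm' : (0:ℝ) < m := by exact_mod_cast hm
  have key : ∀ j : ℕ, m * Real.exp (-(t * ((j : ℝ) + 1)) ^ α) ≤
      ∑ r : Fin m, Real.exp (-(t / m * ((j * m + (r : ℕ) : ℕ) : ℝ)) ^ α) := by
    intro j
    have : ∀ r : Fin m, Real.exp (-(t * ((j : ℝ) + 1)) ^ α) ≤
        Real.exp (-(t / m * ((j * m + (r : ℕ) : ℕ) : ℝ)) ^ α) := by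
      intro r
      refine expArg_le hα (by positivity) ?_
      have hr : ((r : ℕ) : ℝ) ≤ (m : ℝ) - 1 := by
        have h1 : (r : ℕ) + 1 ≤ m := r.is_lt
        have h2 : ((r : ℕ) : ℝ) + 1 ≤ (m : ℝ) := by exact_mod_cast h1
        linarith
      push_cast
      rw [div_mul_eq_mul_div, div_le_iff₀ hm']
      nlinarith [Nat.cast_nonneg (α := ℝ) j]
    calc (m : ℝ) * Real.exp (-(t * ((j : ℝ) + 1)) ^ α)
        = Finset.univ.card • Real.exp (-(t * ((j : ℝ) + 1)) ^ α) := by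
          simp [nsmul_eq_mul]
      _ ≤ _ := Finset.card_nsmul_le_sum _ _ _ (fun r _ => this r)
  have hsumL : Summable (fun j : ℕ => ∑ r : Fin m,
      Real.exp (-(t / m * ((j * m + (r : ℕ) : ℕ) : ℝ)) ^ α)) := by
    refine Summable.of_nonneg_of_le
      (fun j => Finset.sum_nonneg fun r _ => (Real.exp_pos _).le) ?_
      ((summable_P hα ht).mul_left (m:ℝ))
    intro j
    have : ∀ r : Fin m, Real.exp (-(t / m * ((j * m + (r : ℕ) : ℕ) : ℝ)) ^ α)
        ≤ Real.exp (-(t * (j : ℝ)) ^ α) := by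
      intro r
      refine expArg_le hα (by positivity) ?_
      have hr : (0:ℝ) ≤ (r : ℕ) := Nat.cast_nonneg _
      push_cast
      rw [div_mul_eq_mul_div, le_div_iff₀ hm']
      nlinarith [Nat.cast_nonneg (α := ℝ) j]
    calc ∑ r : Fin m, Real.exp (-(t / m * ((j * m + (r : ℕ) : ℕ) : ℝ)) ^ α)
        ≤ Finset.univ.card • Real.exp (-(t * (j : ℝ)) ^ α) :=
          Finset.sum_le_card_nsmul _ _ _ (fun r _ => this r)
      _ = m * Real.exp (-(t * (j : ℝ)) ^ α) := by simp [nsmul_eq_mul]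
  have hmain : (m : ℝ) * (Psum α t - 1) ≤ Psum α (t / m) := by
    rw [← Psum_shift hα ht, P_eq_double hα ht hm, ← tsum_mul_left]
    exact Summable.tsum_le_tsum key ((summable_shift hα ht).mul_left (m:ℝ)) hsumL
  rw [← sub_le_iff_le_add, le_div_iff₀ hm']
  linarith [hmain]

lemma P_compare {α t₁ t₂ δ : ℝ} (hα : 0 < α) (h1 : 0 < t₁) (h12 : t₁ ≤ t₂) (hδ : 0 < δ) :
    Psum α t₁ ≤ (t₂ / t₁ + δ) * Psum α t₂ + 1 := by
  have h2 : 0 < t₂ := lt_of_lt_of_le h1 h12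
  set m : ℕ := max 1 ⌈1 / δ⌉₊ with hmdef
  have hm : 1 ≤ m := le_max_left _ _
  have hm' : (0:ℝ) < m := by exact_mod_cast hm
  have hminv : 1 / (m:ℝ) ≤ δ := by
    rw [div_le_iff₀ hm']
    have h1d : 1 / δ ≤ (m : ℝ) := by
      calc (1:ℝ)/δ ≤ (⌈1/δ⌉₊ : ℝ) := Nat.le_ceil _
        _ ≤ (m : ℝ) := by exact_mod_cast le_max_right 1 ⌈1/δ⌉₊
    calc (1:ℝ) = δ * (1/δ) := by field_simp
      _ ≤ δ * m := by nlinarith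
  set m' : ℕ := ⌈t₂ / t₁ * m⌉₊ with hm'def
  have hratio1 : (1:ℝ) ≤ t₂ / t₁ := (one_le_div h1).mpr h12
  have hm'1 : 1 ≤ m' := Nat.one_le_ceil_iff.mpr (by nlinarith)
  have hm'' : (0:ℝ) < m' := by exact_mod_cast hm'1
  have hle : t₂ / t₁ * m ≤ (m' : ℝ) := Nat.le_ceil _
  have hub : (m' : ℝ) ≤ t₂ / t₁ * m + 1 := by
    have := Nat.ceil_lt_add_one (by positivity : (0:ℝ) ≤ t₂ / t₁ * m)
    linarith
  have hchain1 : Psum α t₁ ≤ Psum α (t₁ / m) / m + 1 := zoomA hα h1 hm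
  have hanti : Psum α (t₁ / m) ≤ Psum α (t₂ / m') := by
    refine P_anti hα (by positivity) ?_
    rw [div_le_div_iff₀ hm'' hm']
    have h' := mul_le_mul_of_nonneg_right hle h1.le
    calc t₂ * m = t₂ / t₁ * m * t₁ := by field_simp
      _ ≤ (m' : ℝ) * t₁ := h'
      _ = t₁ * (m' : ℝ) := by ring
  have hchain3 : Psum α (t₂ / m') ≤ m' * Psum α t₂ := zoomB hα h2 hm'1
  have hP2 : 0 ≤ Psum α t₂ := Psum_nonneg _ _
  have : Psum α t₁ ≤ (m' : ℝ) / m * Psum α t₂ + 1 := by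
    have : Psum α (t₁ / m) / m ≤ (m' : ℝ) * Psum α t₂ / m := by
      gcongr
      exact le_trans hanti hchain3
    calc Psum α t₁ ≤ Psum α (t₁ / m) / m + 1 := hchain1
      _ ≤ (m' : ℝ) * Psum α t₂ / m + 1 := by linarith
      _ = (m' : ℝ) / m * Psum α t₂ + 1 := by ring
  have hfrac : (m' : ℝ) / m ≤ t₂ / t₁ + δ := by
    rw [div_le_iff₀ hm']
    calc (m' : ℝ) ≤ t₂ / t₁ * m + 1 := hub
      _ ≤ (t₂ / t₁ + δ) * m := by
        have : (1:ℝ) ≤ δ * m := by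
          rw [div_le_iff₀ hm'] at hminv; linarith
        ring_nf; nlinarith
  nlinarith [this, hfrac, hP2]

lemma P_large {α : ℝ} (hα : 0 < α) (A : ℝ) :
    ∃ t₀ : ℝ, 0 < t₀ ∧ ∀ t : ℝ, 0 < t → t ≤ t₀ → A ≤ Psum α t := by
  rcases le_or_gt A 0 with hA | hA
  · exact ⟨1, one_pos, fun t ht _ => le_trans hA (Psum_nonneg _ _)⟩
  set n : ℕ := ⌈A⌉₊ + 1 with hn
  have hn0 : (0:ℝ) < n := by positivity
  have hAn : A < (n : ℝ) := by
    calc A ≤ (⌈A⌉₊ : ℝ) := Nat.le_ceil _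
      _ < (n : ℝ) := by rw [hn]; push_cast; linarith
  have hs : (0:ℝ) < Real.log ((n : ℝ) / A) := Real.log_pos (by rw [lt_div_iff₀ hA]; linarith)
  refine ⟨(Real.log ((n:ℝ)/A)) ^ (α⁻¹) / n, by positivity, ?_⟩
  intro t ht ht0
  have hkey : Real.exp (-((Real.log ((n:ℝ)/A)) ^ (α⁻¹) / n * (n:ℝ)) ^ α) = A / n := by
    rw [div_mul_cancel₀ _ hn0.ne', Real.rpow_inv_rpow hs.le hα.ne']
    rw [Real.exp_neg, Real.exp_log (by positivity)]
    field_simp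
  have hterm : ∀ i : ℕ, i < n → A / n ≤ Real.exp (-(t * (i:ℝ)) ^ α) := by
    intro i hi
    rw [← hkey]
    refine expArg_le hα (by positivity) ?_
    have hi' : (i : ℝ) ≤ (n : ℝ) := by exact_mod_cast hi.le
    have hin : (0:ℝ) ≤ (i:ℝ) := Nat.cast_nonneg _
    nlinarith
  have hsum : ∑ i ∈ Finset.range n, Real.exp (-(t * (i:ℝ)) ^ α) ≤ Psum α t :=
    Summable.sum_le_tsum (Finset.range n) (fun i _ => (Real.exp_pos _).le) (summable_P hα ht)
  have hlo : A ≤ ∑ i ∈ Finset.range n, Real.exp (-(t * (i:ℝ)) ^ α) := by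
    calc A = ∑ _i ∈ Finset.range n, A / n := by
          rw [Finset.sum_const, Finset.card_range, nsmul_eq_mul]
          field_simp
      _ ≤ _ := Finset.sum_le_sum fun i hi => hterm i (Finset.mem_range.mp hi)
  linarith

lemma core {α K M β ε : ℝ} (hα : 0 < α) (hK : 0 < K) (hM : 0 ≤ M) (hβ : 0 < β)
    (hε0 : 0 < ε) (hε1 : ε < 1)
    {U : ℤ → ℝ} (hUlb : ∀ j : ℤ, -M ≤ U j)
    {q : ℕ} (hq : 2 ≤ q) {N : ℕ} (hN2 : 2 ≤ N)
    (hN : ∀ n : ℤ, (N : ℤ) ≤ n →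
      (1 - ε) * K * ((n : ℝ)) ^ α ≤ U n ∧ U n ≤ (1 + ε) * K * ((n : ℝ)) ^ α)
    {a : ℤ} (ha0 : 0 ≤ a) (ha1 : a ≤ (q : ℤ) - 1) :
    Summable (fun j : ℤ => Real.exp (-β * U |a + (q : ℤ) * j|)) ∧
    2 * Psum α ((β * ((1 + ε) * K)) ^ (α⁻¹) * q) - (2 * N + 2)
      ≤ (∑' j : ℤ, Real.exp (-β * U |a + (q : ℤ) * j|)) ∧
    (∑' j : ℤ, Real.exp (-β * U |a + (q : ℤ) * j|))
      ≤ (2 * N + 1) * Real.exp (β * M) + 2 * Psum α ((β * ((1 - ε) * K)) ^ (α⁻¹) * q) := by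
  have hq0 : (0:ℝ) < q := by exact_mod_cast lt_of_lt_of_le two_pos hq
  have hqZ : (0:ℤ) < q := by exact_mod_cast lt_of_lt_of_le two_pos hq
  have hc₁ : 0 < (1 - ε) * K := by nlinarith
  have hc₂ : 0 < (1 + ε) * K := by nlinarith
  set t₁ : ℝ := (β * ((1 - ε) * K)) ^ (α⁻¹) * q with ht₁def
  set t₂ : ℝ := (β * ((1 + ε) * K)) ^ (α⁻¹) * q with ht₂def
  have ht₁ : 0 < t₁ := by
    have := Real.rpow_pos_of_pos (show 0 < β * ((1 - ε) * K) by positivity) (α⁻¹)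
    positivity
  have ht₂ : 0 < t₂ := by
    have := Real.rpow_pos_of_pos (show 0 < β * ((1 + ε) * K) by positivity) (α⁻¹)
    positivity
  have targ : ∀ c y : ℝ, 0 < c → 0 ≤ y →
      ((β * c) ^ (α⁻¹) * q * y) ^ α = (β * c) * ((q : ℝ) * y) ^ α := by
    intro c y hc hy
    rw [mul_assoc, Real.mul_rpow (Real.rpow_nonneg (by positivity) _) (by positivity),
      Real.rpow_inv_rpow (by positivity) hα.ne']
  -- upper bound helper
  have hUB : ∀ (z : ℤ) (y : ℝ), (N : ℤ) ≤ z → 0 ≤ y → (q : ℝ) * y ≤ (z : ℝ) →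
      Real.exp (-β * U z) ≤ Real.exp (-(t₁ * y) ^ α) := by
    intro z y hz hy hzy
    have hzR : (0:ℝ) ≤ (z : ℝ) := le_trans (by positivity) hzy
    have h1 := (hN z hz).1
    have hr : ((q : ℝ) * y) ^ α ≤ ((z : ℝ)) ^ α := Real.rpow_le_rpow (by positivity) hzy hα.le
    rw [ht₁def, targ _ _ hc₁ hy]
    apply Real.exp_le_exp.mpr
    nlinarith [mul_le_mul_of_nonneg_left hr (show (0:ℝ) ≤ β * ((1-ε)*K) by positivity),
      mul_le_mul_of_nonneg_left h1 hβ.le]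
  -- lower bound helper
  have hLB : ∀ (z : ℤ) (y : ℝ), (N : ℤ) ≤ z → 0 ≤ y → (z : ℝ) ≤ (q : ℝ) * y →
      Real.exp (-(t₂ * y) ^ α) ≤ Real.exp (-β * U z) := by
    intro z y hz hy hzy
    have hzR : (0:ℝ) ≤ (z : ℝ) := by exact_mod_cast le_trans (by positivity) hz
    have h2 := (hN z hz).2
    have hr : ((z : ℝ)) ^ α ≤ ((q : ℝ) * y) ^ α := Real.rpow_le_rpow hzR hzy hα.le
    rw [ht₂def, targ _ _ hc₂ hy]
    apply Real.exp_le_exp.mpr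
    nlinarith [mul_le_mul_of_nonneg_left hr (show (0:ℝ) ≤ β * ((1+ε)*K) by positivity),
      mul_le_mul_of_nonneg_left h2 hβ.le]
  -- absolute value computations
  have hab1 : ∀ n : ℕ, |a + (q : ℤ) * (Int.ofNat n)| = a + q * n := by
    intro n
    rw [show (Int.ofNat n) = (n:ℤ) from rfl]
    apply abs_of_nonneg
    have : (0:ℤ) ≤ (q:ℤ) * n := by positivity
    omega
  have hab2 : ∀ n : ℕ, |a + (q : ℤ) * (Int.negSucc n)| = q * ((n : ℤ) + 1) - a := by
    intro n
    have hqn : (q:ℤ) ≤ q * ((n:ℤ) + 1) := le_mul_of_one_le_right hqZ.le (by omega)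
    rw [Int.negSucc_eq, show a + (q:ℤ) * (-((n:ℤ)+1)) = -(q * ((n:ℤ)+1) - a) by ring,
      abs_neg]
    apply abs_of_nonneg
    omega
  -- integer bounds
  have hint1 : ∀ n : ℕ, (N : ℤ) ≤ n → (N : ℤ) ≤ a + q * n := by
    intro n hn
    have : (n:ℤ) ≤ q * n := le_mul_of_one_le_left (by omega) (by omega)
    omega
  have hint2 : ∀ n : ℕ, (N : ℤ) ≤ (n : ℤ) + 1 → (N : ℤ) ≤ q * ((n : ℤ) + 1) - a := by
    intro n hn
    have h2 : (q:ℤ) * ((n:ℤ) + 1) = q * n + q := by ring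
    have h3 : (n:ℤ) ≤ q * n := le_mul_of_one_le_left (by omega) (by omega)
    omega
  -- functions
  set E : ℤ → ℝ := fun j => Int.rec (fun n : ℕ => Real.exp (-(t₁ * (n : ℝ)) ^ α))
    (fun n : ℕ => Real.exp (-(t₁ * (n : ℝ)) ^ α)) j with hEdef
  have hE1 : HasSum (fun n : ℕ => Real.exp (-(t₁ * (n : ℝ)) ^ α)) (Psum α t₁) := by
    rw [Psum_def]; exact (summable_P hα ht₁).hasSum
  have hEsum : HasSum E (Psum α t₁ + Psum α t₁) := hE1.int_rec hE1
  set Ind : ℤ → ℝ := fun j => if |j| ≤ (N : ℤ) then Real.exp (β * M) else 0 with hInddef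
  have hIndval0 : ∀ b : ℤ, ¬(|b| ≤ (N:ℤ)) → Ind b = 0 := fun b hb => if_neg hb
  have hIndval1 : ∀ b : ℤ, (|b| ≤ (N:ℤ)) → Ind b = Real.exp (β * M) := fun b hb => if_pos hb
  have hIndsum : Summable Ind := by
    apply summable_of_ne_finset_zero (s := Finset.Icc (-(N:ℤ)) N)
    intro b hb
    simp only [Finset.mem_Icc] at hb
    exact hIndval0 b (by rw [abs_le]; omega)
  have hIndtsum : ∑' j : ℤ, Ind j = (2 * N + 1) * Real.exp (β * M) := by
    rw [tsum_eq_sum (s := Finset.Icc (-(N:ℤ)) N) (fun b hb => by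
      simp only [Finset.mem_Icc] at hb
      exact hIndval0 b (by rw [abs_le]; omega))]
    have hcard : (Finset.Icc (-(N:ℤ)) N).card = 2 * N + 1 := by
      rw [Int.card_Icc]; omega
    rw [Finset.sum_congr rfl (fun j hj => by
      simp only [Finset.mem_Icc] at hj
      exact hIndval1 j (by rw [abs_le]; omega)), Finset.sum_const, hcard,
      nsmul_eq_mul]
    push_cast; ring
  -- pointwise upper bound
  have hgB : ∀ j : ℤ, Real.exp (-β * U |a + (q : ℤ) * j|) ≤ Ind j + E j := by
    intro j
    have hEpos : 0 ≤ E j := by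
      cases j with
      | ofNat n => exact (Real.exp_pos _).le
      | negSucc n => exact (Real.exp_pos _).le
    have hIndpos : 0 ≤ Ind j := by
      by_cases hj : |j| ≤ (N:ℤ)
      · rw [hIndval1 j hj]; positivity
      · rw [hIndval0 j hj]
    by_cases hj : |j| ≤ (N : ℤ)
    · have : Real.exp (-β * U |a + (q:ℤ) * j|) ≤ Real.exp (β * M) := by
        apply Real.exp_le_exp.mpr
        have := hUlb |a + (q:ℤ) * j|
        nlinarith
      have hI : Ind j = Real.exp (β * M) := hIndval1 j hj
      linarith
    · push_neg at hj
      have : Real.exp (-β * U |a + (q:ℤ) * j|) ≤ E j := by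
        cases j with
        | ofNat n =>
          have hn : (N:ℤ) < n := by simpa using hj
          rw [hab1 n]
          have harg : (q:ℝ) * (n:ℝ) ≤ ((a + (q:ℤ) * n : ℤ) : ℝ) := by
            push_cast
            have : (0:ℝ) ≤ (a:ℝ) := by exact_mod_cast ha0
            linarith
          exact hUB _ _ (hint1 n (by omega)) (Nat.cast_nonneg n) harg
        | negSucc n =>
          have hn : (N:ℤ) < (n:ℤ) + 1 := by
            have := hj
            rwa [show |Int.negSucc n| = (n:ℤ) + 1 by rw [Int.negSucc_eq, abs_neg,
              abs_of_nonneg (by omega)]] at this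
          rw [hab2 n]
          have harg : (q:ℝ) * (n:ℝ) ≤ ((q * ((n:ℤ) + 1) - a : ℤ) : ℝ) := by
            push_cast
            have h1 : (a:ℝ) ≤ (q:ℝ) - 1 := by exact_mod_cast ha1
            nlinarith
          exact hUB _ _ (hint2 n (by omega)) (Nat.cast_nonneg n) harg
      linarith
  have hBsum : Summable (fun j : ℤ => Ind j + E j) := hIndsum.add hEsum.summable
  have hgsum : Summable (fun j : ℤ => Real.exp (-β * U |a + (q : ℤ) * j|)) := by
    apply Summable.of_norm_bounded hBsum
    intro j
    rw [Real.norm_eq_abs, abs_of_pos (Real.exp_pos _)]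
    exact hgB j
  refine ⟨hgsum, ?_, ?_⟩
  · -- lower bound
    set pos : ℕ → ℝ := fun n => if N ≤ n then Real.exp (-(t₂ * ((n:ℝ) + 1)) ^ α) else 0
      with hposdef
    set neg : ℕ → ℝ := fun n => if N ≤ n + 1 then Real.exp (-(t₂ * ((n:ℝ) + 1)) ^ α) else 0
      with hnegdef
    have hposle : ∀ n : ℕ, pos n ≤ Real.exp (-(t₂ * ((n:ℝ) + 1)) ^ α) := by
      intro n; simp only [hposdef]; split
      · exact le_refl _
      · exact (Real.exp_pos _).le
    have hnegle : ∀ n : ℕ, neg n ≤ Real.exp (-(t₂ * ((n:ℝ) + 1)) ^ α) := by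
      intro n; simp only [hnegdef]; split
      · exact le_refl _
      · exact (Real.exp_pos _).le
    have hpossum : Summable pos := by
      apply Summable.of_nonneg_of_le (fun n => by simp only [hposdef]; split <;> positivity)
        hposle (summable_shift hα ht₂)
    have hnegsum : Summable neg := by
      apply Summable.of_nonneg_of_le (fun n => by simp only [hnegdef]; split <;> positivity)
        hnegle (summable_shift hα ht₂)
    set L : ℤ → ℝ := fun j => Int.rec pos neg j with hLdef
    have hLsum : HasSum L ((∑' n, pos n) + (∑' n, neg n)) :=
      hpossum.hasSum.int_rec hnegsum.hasSum
    -- the indicator for small n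
    have hindN : Summable (fun n : ℕ => if n < N then (1:ℝ) else 0) :=
      summable_of_ne_finset_zero (s := Finset.range N) (fun b hb =>
        if_neg (fun hc => hb (Finset.mem_range.mpr hc)))
    have hindNtsum : ∑' n : ℕ, (if n < N then (1:ℝ) else 0) = N := by
      rw [tsum_eq_sum (s := Finset.range N) (fun b hb =>
        if_neg (fun hc => hb (Finset.mem_range.mpr hc)))]
      rw [Finset.sum_congr rfl (fun n hn => if_pos (Finset.mem_range.mp hn)),
        Finset.sum_const, Finset.card_range, nsmul_eq_mul, mul_one]
    have hexpone : ∀ n : ℕ, Real.exp (-(t₂ * ((n:ℝ) + 1)) ^ α) ≤ 1 := by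
      intro n
      have h0 : (0:ℝ) ≤ (t₂ * ((n:ℝ)+1)) ^ α := Real.rpow_nonneg (by positivity) α
      calc Real.exp (-(t₂ * ((n:ℝ) + 1)) ^ α) ≤ Real.exp 0 :=
            Real.exp_le_exp.mpr (by linarith)
        _ = 1 := Real.exp_zero
    have hSlow : ∀ (f : ℕ → ℝ), Summable f →
        (∀ n : ℕ, f n ≤ Real.exp (-(t₂ * ((n:ℝ) + 1)) ^ α)) →
        (∀ n : ℕ, Real.exp (-(t₂ * ((n:ℝ) + 1)) ^ α) - (if n < N then (1:ℝ) else 0) ≤ f n) →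
        Psum α t₂ - 1 - N ≤ ∑' n, f n := by
      intro f hf hfle hflow
      have := Summable.tsum_le_tsum hflow ((summable_shift hα ht₂).sub hindN) hf
      rw [Summable.tsum_sub (summable_shift hα ht₂) hindN, Psum_shift hα ht₂, hindNtsum] at this
      linarith
    have hposlow : Psum α t₂ - 1 - N ≤ ∑' n, pos n := by
      apply hSlow pos hpossum hposle
      intro n
      simp only [hposdef]
      by_cases hn : N ≤ n
      · rw [if_pos hn, if_neg (by omega)]; simp
      · rw [if_neg hn, if_pos (by omega)]
        linarith [hexpone n]
    have hneglow : Psum α t₂ - 1 - N ≤ ∑' n, neg n := by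
      apply hSlow neg hnegsum hnegle
      intro n
      simp only [hnegdef]
      by_cases hn : N ≤ n + 1
      · rw [if_pos hn]
        have : (0:ℝ) ≤ (if n < N then (1:ℝ) else 0) := by split <;> norm_num
        linarith
      · rw [if_neg hn, if_pos (by omega)]
        linarith [hexpone n]
    have hLg : ∀ j : ℤ, L j ≤ Real.exp (-β * U |a + (q : ℤ) * j|) := by
      intro j
      simp only [hLdef]
      cases j with
      | ofNat n =>
        show pos n ≤ _
        simp only [hposdef]
        by_cases hn : N ≤ n
        · rw [if_pos hn, hab1 n]
          apply hLB _ _ (hint1 n (by omega)) (by positivity)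
          push_cast
          have h1 : (a:ℝ) ≤ (q:ℝ) - 1 := by exact_mod_cast ha1
          nlinarith
        · rw [if_neg hn]; exact (Real.exp_pos _).le
      | negSucc n =>
        show neg n ≤ _
        simp only [hnegdef]
        by_cases hn : N ≤ n + 1
        · rw [if_pos hn, hab2 n]
          apply hLB _ _ (hint2 n (by omega)) (by positivity)
          push_cast
          have : (0:ℝ) ≤ (a:ℝ) := by exact_mod_cast ha0
          nlinarith
        · rw [if_neg hn]; exact (Real.exp_pos _).le
    have := Summable.tsum_le_tsum hLg hLsum.summable hgsum
    rw [hLsum.tsum_eq] at this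
    have h2 : (2:ℝ) * Psum α t₂ - (2 * N + 2) ≤ (∑' n, pos n) + (∑' n, neg n) := by
      push_cast
      linarith
    linarith
  · -- upper bound
    have := Summable.tsum_le_tsum hgB hgsum hBsum
    rw [Summable.tsum_add hIndsum hEsum.summable, hIndtsum, hEsum.tsum_eq] at this
    linarith

theorem stmt11 (α K M : ℝ) (hα : 0 < α) (hK : 0 < K) (hM : 0 ≤ M)
    (U : ℤ → ℝ) (hUsymm : ∀ j : ℤ, U (-j) = U j)
    (hUlb : ∀ j : ℤ, -M ≤ U j)
    (hUlim : Filter.Tendsto (fun j : ℤ => U j / (|j| : ℝ) ^ α)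
      Filter.cofinite (nhds K))
    (q : ℕ) (hq : 2 ≤ q) :
    (∀ β : ℝ, 0 < β → ∀ a : ℤ, 0 ≤ a → a ≤ (q : ℤ) - 1 →
      Summable fun j : ℤ => Real.exp (-β * U |a + q * j|)) ∧
    Filter.Tendsto
      (fun β : ℝ =>
        (Finset.range q).sup' (Finset.nonempty_range_iff.mpr (by omega))
          (fun a : ℕ =>
            |Real.log (∑' j : ℤ, Real.exp (-β * U |(a : ℤ) + q * j|))
              - Real.log (∑' j : ℤ, Real.exp (-β * U |(q : ℤ) * j|))|))
      (nhdsWithin 0 (Set.Ioi 0)) (nhds 0) := by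
  have hq0 : (0:ℝ) < q := by exact_mod_cast lt_of_lt_of_le two_pos hq
  -- extraction of the threshold N from the limit hypothesis
  have getN : ∀ ε : ℝ, 0 < ε → ∃ N : ℕ, 2 ≤ N ∧
      ∀ n : ℤ, (N : ℤ) ≤ n →
        (1 - ε) * K * ((n : ℝ)) ^ α ≤ U n ∧ U n ≤ (1 + ε) * K * ((n : ℝ)) ^ α := by
    intro ε hε
    have hev : ∀ᶠ j in Filter.cofinite, dist (U j / (|j| : ℝ) ^ α) K < ε * K :=
      Metric.tendsto_nhds.mp hUlim (ε * K) (by positivity)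
    have hfin : {j : ℤ | ¬ dist (U j / (|j| : ℝ) ^ α) K < ε * K}.Finite :=
      Filter.eventually_cofinite.mp hev
    set N₀ : ℕ := hfin.toFinset.sup Int.natAbs with hN₀
    refine ⟨N₀ + 2, by omega, ?_⟩
    intro n hn
    have hnpos : (0:ℤ) < n := by
      have : ((N₀ + 2 : ℕ) : ℤ) ≤ n := hn
      omega
    have hmem : dist (U n / (|n| : ℝ) ^ α) K < ε * K := by
      by_contra hc
      have : n ∈ hfin.toFinset := hfin.mem_toFinset.mpr hc
      have h1 : n.natAbs ≤ N₀ := Finset.le_sup this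
      have h2 : (n.natAbs : ℤ) = n := Int.natAbs_of_nonneg hnpos.le
      omega
    have habs : |(n:ℝ)| = (n:ℝ) := abs_of_nonneg (by exact_mod_cast hnpos.le)
    rw [habs, Real.dist_eq, abs_sub_lt_iff] at hmem
    have hxα : (0:ℝ) < ((n:ℝ)) ^ α := by
      apply Real.rpow_pos_of_pos
      exact_mod_cast hnpos
    constructor
    · have := hmem.2
      rw [sub_lt_iff_lt_add] at this
      have h3 : K - ε * K < U n / (n:ℝ) ^ α := by linarith
      have := (lt_div_iff₀ hxα).mp h3
      nlinarith
    · have := hmem.1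
      rw [sub_lt_iff_lt_add] at this
      have := (div_lt_iff₀ hxα).mp this
      nlinarith
  constructor
  · intro β hβ a ha0 ha1
    obtain ⟨N, hN2, hN⟩ := getN (1/2) (by norm_num)
    exact (core hα hK hM hβ (by norm_num) (by norm_num) hUlb hq hN2 hN ha0 ha1).1
  · rw [Metric.tendsto_nhdsWithin_nhds]
    intro η hη
    -- choose ε
    have hr1 : 1 < Real.exp (α * η / 4) := by
      rw [show (1:ℝ) = Real.exp 0 from Real.exp_zero.symm]
      exact Real.exp_lt_exp.mpr (by nlinarith [hα, hη])
    obtain ⟨ε, hεdef⟩ : ∃ x : ℝ, x = min (1/2) ((Real.exp (α * η / 4) - 1) / 4) := ⟨_, rfl⟩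
    have hε0 : 0 < ε := by rw [hεdef]; exact lt_min (by norm_num) (by linarith)
    have hεhalf : ε ≤ 1/2 := by rw [hεdef]; exact min_le_left _ _
    have hε1 : ε < 1 := lt_of_le_of_lt hεhalf (by norm_num)
    have hratio : (1 + ε) / (1 - ε) ≤ Real.exp (α * η / 4) := by
      rw [div_le_iff₀ (by linarith)]
      have h4 : ε ≤ (Real.exp (α * η / 4) - 1) / 4 := by
        rw [hεdef]; exact min_le_right _ _
      nlinarith
    have hlam : ((1 + ε) / (1 - ε)) ^ (α⁻¹) ≤ Real.exp (η / 4) := by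
      calc ((1 + ε) / (1 - ε)) ^ (α⁻¹) ≤ (Real.exp (α * η / 4)) ^ (α⁻¹) :=
            Real.rpow_le_rpow (div_nonneg (by linarith) (by linarith)) hratio (by positivity)
        _ = Real.exp (η / 4) := by
            rw [← Real.exp_mul]
            congr 1
            field_simp
    obtain ⟨N, hN2, hN⟩ := getN ε hε0
    obtain ⟨δ₀, hδ₀def⟩ : ∃ x : ℝ, x = Real.exp (η / 2) - Real.exp (η / 4) := ⟨_, rfl⟩
    have hδ₀ : 0 < δ₀ := by
      rw [hδ₀def, sub_pos]
      exact Real.exp_lt_exp.mpr (by linarith)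
    obtain ⟨C1, hC1def⟩ : ∃ x : ℝ, x = (2 * (N:ℝ) + 1) * Real.exp M + 2 := ⟨_, rfl⟩
    obtain ⟨C2, hC2def⟩ : ∃ x : ℝ, x = (2 * (N:ℝ) + 2 : ℝ) := ⟨_, rfl⟩
    obtain ⟨d, hddef⟩ : ∃ x : ℝ, x = Real.exp η - Real.exp (η / 2) := ⟨_, rfl⟩
    have hd : 0 < d := by
      rw [hddef, sub_pos]
      exact Real.exp_lt_exp.mpr (by linarith)
    have hC1 : 0 < C1 := by
      rw [hC1def]; positivity
    obtain ⟨H₀, hH₀def⟩ : ∃ x : ℝ, x = max ((C1 + Real.exp η * C2) / (2 * d) + 1) ((N : ℝ) + 2) := ⟨_, rfl⟩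
    obtain ⟨t₀, ht₀, hPlarge⟩ := P_large hα H₀
    obtain ⟨δβ, hδβdef⟩ : ∃ x : ℝ, x = min 1 ((t₀ / q) ^ α / ((1 + ε) * K)) := ⟨_, rfl⟩
    have hδβ : 0 < δβ := by
      rw [hδβdef]
      apply lt_min one_pos
      have : (0:ℝ) < (t₀ / q) ^ α := Real.rpow_pos_of_pos (by positivity) α
      positivity
    refine ⟨δβ, hδβ, ?_⟩
    intro β hβmem hβdist
    have hβ : 0 < β := hβmem
    rw [Real.dist_eq, sub_zero, abs_of_pos hβ] at hβdist
    have hβ1 : β ≤ 1 := by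
      rw [hδβdef] at hβdist
      exact le_of_lt (lt_of_lt_of_le hβdist (min_le_left _ _))
    -- the two scales
    obtain ⟨t₁, ht₁def⟩ : ∃ x : ℝ, x = (β * ((1 - ε) * K)) ^ (α⁻¹) * (q:ℝ) := ⟨_, rfl⟩
    obtain ⟨t₂, ht₂def⟩ : ∃ x : ℝ, x = (β * ((1 + ε) * K)) ^ (α⁻¹) * (q:ℝ) := ⟨_, rfl⟩
    have hc₁ : 0 < (1 - ε) * K := by nlinarith
    have hc₂ : 0 < (1 + ε) * K := by nlinarith
    have ht₁ : 0 < t₁ := by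
      have := Real.rpow_pos_of_pos (show 0 < β * ((1 - ε) * K) by positivity) (α⁻¹)
      rw [ht₁def]; positivity
    have ht₂ : 0 < t₂ := by
      have := Real.rpow_pos_of_pos (show 0 < β * ((1 + ε) * K) by positivity) (α⁻¹)
      rw [ht₂def]; positivity
    have h12 : t₁ ≤ t₂ := by
      rw [ht₁def, ht₂def]
      have : β * ((1 - ε) * K) ≤ β * ((1 + ε) * K) := by
        nlinarith [mul_nonneg (mul_nonneg hβ.le hε0.le) hK.le]
      have := Real.rpow_le_rpow (by positivity) this (by positivity : (0:ℝ) ≤ α⁻¹)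
      nlinarith
    have hrat : t₂ / t₁ = ((1 + ε) / (1 - ε)) ^ (α⁻¹) := by
      rw [ht₁def, ht₂def, mul_div_mul_right _ _ (ne_of_gt hq0),
        ← Real.div_rpow (by positivity) (by positivity)]
      congr 1
      rw [mul_div_mul_left _ _ (ne_of_gt hβ), mul_div_mul_right _ _ (ne_of_gt hK)]
    have ht₂t₀ : t₂ ≤ t₀ := by
      have hβ2 : β ≤ (t₀ / q) ^ α / ((1 + ε) * K) := by
        rw [hδβdef] at hβdist
        exact le_of_lt (lt_of_lt_of_le hβdist (min_le_right _ _))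
      have h1 : β * ((1 + ε) * K) ≤ (t₀ / q) ^ α := (le_div_iff₀ hc₂).mp hβ2
      have h2 : (β * ((1 + ε) * K)) ^ (α⁻¹) ≤ t₀ / q := by
        calc (β * ((1 + ε) * K)) ^ (α⁻¹) ≤ ((t₀ / q) ^ α) ^ (α⁻¹) :=
              Real.rpow_le_rpow (by positivity) h1 (by positivity)
          _ = t₀ / q := Real.rpow_rpow_inv (by positivity) hα.ne'
      rw [ht₂def]
      calc (β * ((1 + ε) * K)) ^ (α⁻¹) * q ≤ (t₀ / q) * q := by nlinarith [h2]
        _ = t₀ := by field_simp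
    obtain ⟨P, hPdef⟩ : ∃ x : ℝ, x = Psum α t₂ := ⟨_, rfl⟩
    have hP0 : 0 ≤ P := by rw [hPdef]; exact Psum_nonneg _ _
    have hPH : H₀ ≤ P := by rw [hPdef]; exact hPlarge t₂ ht₂ ht₂t₀
    have hPN : (N : ℝ) + 2 ≤ P := le_trans (by rw [hH₀def]; exact le_max_right _ _) hPH
    have hPd : (C1 + Real.exp η * C2) / (2 * d) + 1 ≤ P :=
      le_trans (by rw [hH₀def]; exact le_max_left _ _) hPH
    have hcomp : Psum α t₁ ≤ Real.exp (η / 2) * P + 1 := by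
      have := P_compare hα ht₁ h12 hδ₀
      rw [hrat, ← hPdef] at this
      have hco : ((1 + ε) / (1 - ε)) ^ (α⁻¹) + δ₀ ≤ Real.exp (η / 2) := by
        rw [hδ₀def]; linarith
      nlinarith
    -- uniform bounds for all residues
    obtain ⟨Lo, hLodef⟩ : ∃ x : ℝ, x = 2 * P - C2 := ⟨_, rfl⟩
    obtain ⟨Up, hUpdef⟩ : ∃ x : ℝ, x = C1 + 2 * Real.exp (η / 2) * P := ⟨_, rfl⟩
    have hLo : 0 < Lo := by rw [hLodef, hC2def]; nlinarith
    have hbound : ∀ a : ℤ, 0 ≤ a → a ≤ (q : ℤ) - 1 →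
        Lo ≤ (∑' j : ℤ, Real.exp (-β * U |a + (q:ℤ) * j|)) ∧
        (∑' j : ℤ, Real.exp (-β * U |a + (q:ℤ) * j|)) ≤ Up := by
      intro a ha0 ha1
      obtain ⟨-, hlow, hup⟩ := core hα hK hM hβ hε0 hε1 hUlb hq hN2 hN ha0 ha1
      rw [← ht₂def, ← hPdef] at hlow
      rw [← ht₁def] at hup
      constructor
      · rw [hLodef, hC2def]
        linarith [hlow]
      · rw [hUpdef, hC1def]
        have he : Real.exp (β * M) ≤ Real.exp M := Real.exp_le_exp.mpr (by nlinarith)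
        have hmul : (2 * (N:ℝ) + 1) * Real.exp (β * M) ≤ (2 * (N:ℝ) + 1) * Real.exp M :=
          mul_le_mul_of_nonneg_left he (by positivity)
        linarith [hup, hcomp]
    -- strict comparison of the envelope
    have hkey : C1 + Real.exp η * C2 ≤ (P - 1) * (2 * d) := by
      have h2 : (C1 + Real.exp η * C2) / (2 * d) ≤ P - 1 := by linarith [hPd]
      exact (div_le_iff₀ (by positivity)).mp h2
    have hUplt : Up < Real.exp η * Lo := by
      rw [hUpdef, hLodef]
      nlinarith [hkey, hd, hddef]
    have hUp0 : 0 < Up := by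
      rw [hUpdef]
      nlinarith [hC1, hP0, Real.exp_pos (η / 2)]
    have hloglt : Real.log Up - Real.log Lo < η := by
      have hl := Real.log_lt_log hUp0 hUplt
      rw [Real.log_mul (Real.exp_ne_zero η) (ne_of_gt hLo), Real.log_exp] at hl
      linarith
    have hZ0eq : (∑' j : ℤ, Real.exp (-β * U |(q:ℤ) * j|))
        = ∑' j : ℤ, Real.exp (-β * U |(0:ℤ) + (q:ℤ) * j|) :=
      tsum_congr fun j => by rw [zero_add]
    have h0b := hbound 0 le_rfl (by omega)
    have hlog0lo : Real.log Lo ≤ Real.log (∑' j : ℤ, Real.exp (-β * U |(0:ℤ) + (q:ℤ) * j|)) :=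
      Real.log_le_log hLo h0b.1
    have hlog0up : Real.log (∑' j : ℤ, Real.exp (-β * U |(0:ℤ) + (q:ℤ) * j|)) ≤ Real.log Up :=
      Real.log_le_log (lt_of_lt_of_le hLo h0b.1) h0b.2
    rw [Real.dist_eq, sub_zero, abs_lt]
    constructor
    · have hmem : 0 ∈ Finset.range q := Finset.mem_range.mpr (by omega)
      have := Finset.le_sup' (f := fun a : ℕ =>
        |Real.log (∑' j : ℤ, Real.exp (-β * U |(a : ℤ) + q * j|))
          - Real.log (∑' j : ℤ, Real.exp (-β * U |(q : ℤ) * j|))|) hmem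
      have habs := abs_nonneg (Real.log (∑' j : ℤ, Real.exp (-β * U |((0:ℕ) : ℤ) + q * j|))
          - Real.log (∑' j : ℤ, Real.exp (-β * U |(q : ℤ) * j|)))
      linarith
    · rw [Finset.sup'_lt_iff]
      intro b hb
      have hb' : b < q := Finset.mem_range.mp hb
      have hbb := hbound (b : ℤ) (by positivity) (by omega)
      have hlogblo : Real.log Lo ≤ Real.log (∑' j : ℤ, Real.exp (-β * U |(b:ℤ) + (q:ℤ) * j|)) :=
        Real.log_le_log hLo hbb.1
      have hlogbup : Real.log (∑' j : ℤ, Real.exp (-β * U |(b:ℤ) + (q:ℤ) * j|)) ≤ Real.log Up :=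
        Real.log_le_log (lt_of_lt_of_le hLo hbb.1) hbb.2
      rw [hZ0eq, abs_lt]
      constructor <;> linarith
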